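/- Let p > n be a prime, r ≥ 1, and n ≥ 2. Then in ℤ/p^(r+1)ℤ, S_n^(1)(p^(r+1)) = Σ_{k=1}^{n-1} C(p-k+n-1, n-1) · S_n^(k)(p^r), where S_n^(k)(p^m) denotes the sum over positive integers l_1,...,l_n < p^m coprime to p with l_1+⋯+l_n = k·p^m of the product of the inverses of the l_i in ℤ/p^(r+1)ℤ. -/

import Mathlib

open Finset


lemma aux6_adt_succ (k n : ℕ) : Finset.Nat.antidiagonalTuple (k+1) n =
    (Finset.HasAntidiagonal.antidiagonal n).biUnion
      (fun ab => (Finset.Nat.antidiagonalTuple k ab.2).image (Fin.cons ab.1)) := by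
  ext x
  simp only [Finset.Nat.mem_antidiagonalTuple, Finset.mem_biUnion, Finset.mem_image,
    Finset.HasAntidiagonal.mem_antidiagonal, Prod.exists]
  constructor
  · intro hx
    refine ⟨x 0, ∑ i : Fin k, x i.succ, ?_, Fin.tail x, ?_, Fin.cons_self_tail x⟩
    · rw [← hx, Fin.sum_univ_succ]
    · rfl
  · rintro ⟨a, b, hab, y, hy, rfl⟩
    rw [Fin.sum_cons, hy, hab]

lemma aux6_card_adt : ∀ k n : ℕ, (Finset.Nat.antidiagonalTuple k n).card = Nat.multichoose k n := by
  intro k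
  induction k with
  | zero => intro n; cases n <;> simp
  | succ k ih =>
    have key : ∀ n, (Finset.Nat.antidiagonalTuple (k+1) n).card
        = ∑ j ∈ Finset.range (n+1), Nat.multichoose k j := by
      intro n
      rw [aux6_adt_succ, Finset.card_biUnion]
      · rw [Finset.Nat.sum_antidiagonal_eq_sum_range_succ_mk]
        rw [← Finset.sum_range_reflect]
        refine Finset.sum_congr rfl fun j hj => ?_
        rw [Finset.mem_range] at hj
        rw [Finset.card_image_of_injective _ (Fin.cons_right_injective _), ih]
        congr 1
        omega
      · rintro ⟨a, b⟩ ha ⟨a', b'⟩ ha' hne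
        simp only [Finset.mem_coe, Finset.HasAntidiagonal.mem_antidiagonal] at ha ha'
        rw [Function.onFun, Finset.disjoint_left]
        rintro x hx hx'
        simp only [Finset.mem_image] at hx hx'
        obtain ⟨y, hy, rfl⟩ := hx
        obtain ⟨y', hy', h⟩ := hx'
        apply hne
        have h0 : a' = a := by
          have := congrFun h 0; simpa using this
        subst h0
        have : b = b' := by omega
        simp [this]
    intro n
    rw [key]
    induction n with
    | zero => simp
    | succ m ihm =>
      rw [Finset.sum_range_succ, ihm, Nat.multichoose_succ_succ]
      omega


lemma aux6_sum_coord_adt (nn s : ℕ) (i j : Fin nn) :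
    ∑ c ∈ Finset.Nat.antidiagonalTuple nn s, c i
      = ∑ c ∈ Finset.Nat.antidiagonalTuple nn s, c j := by
  refine Finset.sum_nbij' (fun c => c ∘ Equiv.swap i j) (fun c => c ∘ Equiv.swap i j)
    ?_ ?_ ?_ ?_ ?_
  · intro c hc
    rw [Finset.Nat.mem_antidiagonalTuple] at hc ⊢
    rw [← hc]
    exact Equiv.sum_comp (Equiv.swap i j) c
  · intro c hc
    rw [Finset.Nat.mem_antidiagonalTuple] at hc ⊢
    rw [← hc]
    exact Equiv.sum_comp (Equiv.swap i j) c
  · intro c _; funext t; simp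
  · intro c _; funext t; simp
  · intro c _; simp [Equiv.swap_apply_left]

lemma aux6_dvd_sum_coord (p nn s : ℕ) (hp : p.Prime) (hn : 0 < nn) (hnp : nn < p)
    (hN : p ∣ (Finset.Nat.antidiagonalTuple nn s).card) (i : Fin nn) :
    p ∣ ∑ c ∈ Finset.Nat.antidiagonalTuple nn s, c i := by
  have htot : ∑ j : Fin nn, ∑ c ∈ Finset.Nat.antidiagonalTuple nn s, c j
      = (Finset.Nat.antidiagonalTuple nn s).card * s := by
    rw [Finset.sum_comm]
    rw [Finset.sum_congr rfl (fun c hc => Finset.Nat.mem_antidiagonalTuple.mp hc)]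
    rw [Finset.sum_const, smul_eq_mul]
  have hsym : ∑ j : Fin nn, ∑ c ∈ Finset.Nat.antidiagonalTuple nn s, c j
      = nn * ∑ c ∈ Finset.Nat.antidiagonalTuple nn s, c i := by
    rw [Finset.sum_congr rfl (fun j _ => aux6_sum_coord_adt nn s j i)]
    simp [Finset.sum_const, mul_comm]
  have hdvd : p ∣ nn * ∑ c ∈ Finset.Nat.antidiagonalTuple nn s, c i := by
    rw [← hsym, htot]; exact Dvd.dvd.mul_right hN s
  exact Nat.Coprime.dvd_of_dvd_mul_left
    ((Nat.Prime.coprime_iff_not_dvd hp).mpr (Nat.not_dvd_of_pos_of_lt hn hnp)) hdvd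

lemma aux6_prod_add_nil {R : Type*} [CommRing R] {ι : Type*} [DecidableEq ι]
    (s : Finset ι) (a b : ι → R) (h : ∀ i j, b i * b j = 0) :
    ∏ i ∈ s, (a i + b i) = ∏ i ∈ s, a i + ∑ i ∈ s, b i * ∏ j ∈ s.erase i, a j := by
  induction s using Finset.induction_on with
  | empty => simp
  | @insert x s hx ih =>
    rw [Finset.prod_insert hx, Finset.prod_insert hx, Finset.sum_insert hx, ih,
      Finset.erase_insert hx]
    have hterm : ∀ i ∈ s, b i * ∏ j ∈ (insert x s).erase i, a j
        = a x * (b i * ∏ j ∈ s.erase i, a j) := by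
      intro i hi
      have hxi : i ≠ x := fun hh => hx (hh ▸ hi)
      rw [Finset.erase_insert_of_ne hxi.symm, Finset.prod_insert (fun hc => hx (Finset.mem_of_mem_erase hc))]
      ring
    rw [Finset.sum_congr rfl hterm, ← Finset.mul_sum]
    have hbxS : b x * ∑ i ∈ s, (b i * ∏ j ∈ s.erase i, a j) = 0 := by
      rw [Finset.mul_sum]
      refine Finset.sum_eq_zero fun i _ => ?_
      rw [← mul_assoc, h x i, zero_mul]
    calc (a x + b x) * (∏ i ∈ s, a i + ∑ i ∈ s, b i * ∏ j ∈ s.erase i, a j)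
        = a x * ∏ i ∈ s, a i + (b x * ∏ i ∈ s, a i
            + a x * ∑ i ∈ s, b i * ∏ j ∈ s.erase i, a j)
            + b x * ∑ i ∈ s, (b i * ∏ j ∈ s.erase i, a j) := by ring
      _ = _ := by rw [hbxS, add_zero]

lemma aux6_inv_add_nil {N : ℕ} (m t : ℕ) (hm : IsUnit ((m : ZMod N)))
    (ht : ((t : ZMod N))^2 = 0) :
    ((m + t : ℕ) : ZMod N)⁻¹ = (m : ZMod N)⁻¹ - (t : ZMod N) * ((m : ZMod N)⁻¹)^2 := by
  have h1 : (m : ZMod N) * (m : ZMod N)⁻¹ = 1 := ZMod.mul_inv_of_unit _ hm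
  set B := (m : ZMod N)⁻¹ - (t : ZMod N) * ((m : ZMod N)⁻¹)^2 with hB
  have key : ((m + t : ℕ) : ZMod N) * B = 1 := by
    push_cast
    calc ((m : ZMod N) + t) * B
        = ((m : ZMod N) * (m : ZMod N)⁻¹) * 1
          + ((t : ZMod N) * (m : ZMod N)⁻¹) * (1 - (m : ZMod N) * (m : ZMod N)⁻¹)
          - ((t : ZMod N))^2 * ((m : ZMod N)⁻¹)^2 := by rw [hB]; ring
      _ = 1 := by rw [h1, ht]; ring
  have hu : IsUnit ((m + t : ℕ) : ZMod N) := isUnit_iff_exists_inv.mpr ⟨_, key⟩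
  have h2 := ZMod.inv_mul_of_unit _ hu
  calc (((m + t : ℕ) : ZMod N))⁻¹
      = (((m + t : ℕ) : ZMod N))⁻¹ * (((m + t : ℕ) : ZMod N) * B) := by rw [key, mul_one]
    _ = ((((m + t : ℕ) : ZMod N))⁻¹ * ((m + t : ℕ) : ZMod N)) * B := by ring
    _ = B := by rw [h2, one_mul]


lemma aux6_decomp_mem (p n r : ℕ) (hp : p.Prime) (hn : 2 ≤ n) (hpn : n < p) (hr : 1 ≤ r)
    (l : Fin n → ℕ) (hpos : ∀ i, 0 < l i) (hlt : ∀ i, l i < p^(r+1))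
    (hcop : ∀ i, Nat.Coprime (l i) p) (hsum : ∑ i, l i = p^(r+1)) :
    (∀ i, 0 < l i % p^r ∧ Nat.Coprime (l i % p^r) p) ∧
    ∑ i, l i / p^r < p ∧
    1 ≤ p - ∑ i, l i / p^r ∧ p - ∑ i, l i / p^r ≤ n - 1 ∧
    ∑ i, (l i % p^r) = (p - ∑ i, l i / p^r) * p^r := by
  set q := p ^ r with hq
  have hq0 : 0 < q := Nat.pow_pos hp.pos
  have hpq : p ∣ q := hq ▸ dvd_pow_self p (by omega)
  have hnotdvd : ∀ i, ¬ p ∣ l i := fun i =>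
    (Nat.Prime.coprime_iff_not_dvd hp).mp (Nat.coprime_comm.mp (hcop i))
  have hmc : ∀ i, 0 < l i % q ∧ Nat.Coprime (l i % q) p := by
    intro i
    constructor
    · rcases Nat.eq_zero_or_pos (l i % q) with h0 | h0
      · exact absurd (hpq.trans (Nat.dvd_of_mod_eq_zero h0)) (hnotdvd i)
      · exact h0
    · rw [Nat.coprime_comm, Nat.Prime.coprime_iff_not_dvd hp]
      intro hdvd
      apply hnotdvd i
      have : l i = l i % q + q * (l i / q) := (Nat.mod_add_div _ _).symm
      rw [this]
      exact Nat.dvd_add hdvd (Dvd.dvd.mul_right hpq _)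
  have hdec : ∑ i, l i % q + q * ∑ i, l i / q = q * p := by
    rw [Finset.mul_sum, ← Finset.sum_add_distrib]
    rw [Finset.sum_congr rfl (fun i _ => Nat.mod_add_div (l i) q), hsum]
    rw [pow_succ]
  have hmpos : 0 < ∑ i, l i % q :=
    Finset.sum_pos (fun i _ => (hmc i).1) ⟨⟨0, by omega⟩, Finset.mem_univ _⟩
  have hmub : ∑ i, l i % q ≤ n * (q - 1) := by
    calc ∑ i, l i % q ≤ ∑ _i : Fin n, (q - 1) :=
          Finset.sum_le_sum (fun i _ => by
            have := Nat.mod_lt (l i) hq0; omega)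
      _ = n * (q - 1) := by rw [Finset.sum_const, Finset.card_univ, Fintype.card_fin,
            smul_eq_mul]
  have hBlt : ∑ i, l i / q < p := by
    by_contra hge
    push_neg at hge
    have : q * p ≤ q * ∑ i, l i / q := Nat.mul_le_mul_left q hge
    omega
  refine ⟨hmc, hBlt, ?_, ?_, ?_⟩
  · -- 1 ≤ p - B
    omega
  · -- p - B ≤ n - 1
    have hkey : q * (p - ∑ i, l i / q) + q * ∑ i, l i / q = q * p := by
      rw [← Nat.mul_add, Nat.sub_add_cancel hBlt.le]
    have hqk : q * (p - ∑ i, l i / q) = ∑ i, l i % q := by omega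
    by_contra hgt
    push_neg at hgt
    have hge : n ≤ p - ∑ i, l i / q := by omega
    have : q * n ≤ q * (p - ∑ i, l i / q) := Nat.mul_le_mul_left q hge
    have hnq : n * (q - 1) < n * q := by
      apply mul_lt_mul_of_pos_left (by omega : q - 1 < q) (by omega : 0 < n)
    rw [hqk] at this
    nlinarith [hmub]
  · have hkey : q * (p - ∑ i, l i / q) + q * ∑ i, l i / q = q * p := by
      rw [← Nat.mul_add, Nat.sub_add_cancel hBlt.le]
    have hqk : q * (p - ∑ i, l i / q) = ∑ i, l i % q := by omega
    rw [← hqk, Nat.mul_comm]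


lemma aux6_comp_mem (p n r k : ℕ) (hp : p.Prime) (hn : 2 ≤ n) (hpn : n < p) (hr : 1 ≤ r)
    (hk1 : 1 ≤ k) (hk2 : k ≤ n - 1)
    (m c : Fin n → ℕ) (hm : ∀ i, 0 < m i ∧ m i < p^r) (hcop : ∀ i, Nat.Coprime (m i) p)
    (hms : ∑ i, m i = k * p^r) (hcs : ∑ i, c i = p - k) :
    (∀ i, 0 < m i + p^r * c i ∧ m i + p^r * c i < p^(r+1)) ∧
    (∀ i, Nat.Coprime (m i + p^r * c i) p) ∧
    (∑ i, (m i + p^r * c i)) = p^(r+1) ∧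
    (∀ i, (m i + p^r * c i) % p^r = m i) ∧ (∀ i, (m i + p^r * c i) / p^r = c i) ∧
    p - ∑ i, (m i + p^r * c i) / p^r = k := by
  set q := p ^ r with hq
  have hq0 : 0 < q := Nat.pow_pos hp.pos
  have hpq : p ∣ q := hq ▸ dvd_pow_self p (by omega)
  have hkp : k < p := by omega
  have hci : ∀ i, c i ≤ p - k := fun i => hcs ▸ Finset.single_le_sum
    (f := c) (fun j _ => Nat.zero_le _) (Finset.mem_univ i)
  have hdiv : ∀ i, (m i + q * c i) / q = c i := by
    intro i
    rw [Nat.add_mul_div_left _ _ hq0, Nat.div_eq_of_lt (hm i).2, Nat.zero_add]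
  have hmod : ∀ i, (m i + q * c i) % q = m i := by
    intro i
    rw [Nat.add_mul_mod_self_left, Nat.mod_eq_of_lt (hm i).2]
  refine ⟨?_, ?_, ?_, hmod, hdiv, ?_⟩
  · intro i
    refine ⟨by have := (hm i).1; omega, ?_⟩
    have h1 : q * c i ≤ q * (p - 1) := Nat.mul_le_mul_left q (by have := hci i; omega)
    have h2 : q * (p - 1) + q = q * p := by
      rw [← Nat.mul_succ]; congr 1; omega
    calc m i + q * c i < q + q * (p - 1) := by have := (hm i).2; omega
      _ = q * p := by omega
      _ = p ^ (r + 1) := by rw [pow_succ, hq]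
  · intro i
    rw [Nat.coprime_comm, Nat.Prime.coprime_iff_not_dvd hp]
    intro hdvd
    have hqc : p ∣ q * c i := Dvd.dvd.mul_right hpq _
    have : p ∣ m i := (Nat.dvd_add_right hqc).mp (by rwa [Nat.add_comm] at hdvd)
    exact (Nat.Prime.coprime_iff_not_dvd hp).mp (Nat.coprime_comm.mp (hcop i)) this
  · rw [Finset.sum_add_distrib, ← Finset.mul_sum, hms, hcs]
    have : q * (p - k) + q * k = q * p := by rw [← Nat.mul_add]; congr 1; omega
    have hps : p^(r+1) = q * p := by rw [pow_succ, hq]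
    have hkq : k * q = q * k := Nat.mul_comm _ _
    omega
  · rw [Finset.sum_congr rfl (fun i _ => hdiv i), hcs]
    omega


lemma aux6_inner_sum (p n r k : ℕ) (hp : p.Prime) (hn : 2 ≤ n) (hpn : n < p) (hr : 1 ≤ r)
    (hk1 : 1 ≤ k) (hk2 : k ≤ n - 1)
    (m : Fin n → ℕ) (hcop : ∀ i, Nat.Coprime (m i) p) :
    ∑ c ∈ Finset.Nat.antidiagonalTuple n (p - k),
        ∏ i, ((m i + p^r * c i : ℕ) : ZMod (p^(r+1)))⁻¹
      = (Nat.choose (p - k + n - 1) (n - 1) : ZMod (p^(r+1)))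
        * ∏ i, ((m i : ℕ) : ZMod (p^(r+1)))⁻¹ := by
  set q := p ^ r with hq
  set P := p ^ (r+1) with hP
  have hP0 : 0 < P := Nat.pow_pos hp.pos
  haveI : NeZero P := ⟨hP0.ne'⟩
  have hq2 : ((q : ZMod P))^2 = 0 := by
    have : ((q^2 : ℕ) : ZMod P) = 0 := by
      rw [ZMod.natCast_eq_zero_iff, hq, hP, ← pow_mul]
      exact pow_dvd_pow p (by omega)
    rw [← this]; push_cast; ring
  have hunit : ∀ i, IsUnit ((m i : ℕ) : ZMod P) := fun i =>
    (ZMod.isUnit_iff_coprime _ _).mpr ((hcop i).pow_right (r+1))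
  set C := Finset.Nat.antidiagonalTuple n (p - k) with hC
  set a : Fin n → ZMod P := fun i => ((m i : ℕ) : ZMod P)⁻¹ with ha
  set G : Fin n → ZMod P := fun i => -(a i ^ 2 * ∏ j ∈ Finset.univ.erase i, a j) with hG
  -- card and divisibility
  have hcard : C.card = Nat.choose (p - k + n - 1) (n - 1) := by
    rw [hC, aux6_card_adt, Nat.multichoose_eq]
    have h1 : n + (p - k) - 1 = p - k + n - 1 := by omega
    rw [h1]
    have h3 := Nat.choose_symm (n := p - k + n - 1) (k := n - 1) (by omega)
    have h4 : p - k + n - 1 - (n - 1) = p - k := by omega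
    rw [h4] at h3
    exact h3
  have hNdvd : p ∣ C.card := by
    rw [hcard]
    exact Nat.Prime.dvd_choose hp (by omega) (by omega) (by omega)
  have hzero : ∀ i : Fin n, ∑ c ∈ C, ((q * c i : ℕ) : ZMod P) = 0 := by
    intro i
    rw [← Nat.cast_sum, ← Finset.mul_sum, ZMod.natCast_eq_zero_iff]
    have hpE : p ∣ ∑ c ∈ C, c i :=
      aux6_dvd_sum_coord p n (p - k) hp (by omega) hpn hNdvd i
    rw [hP, pow_succ, hq]
    exact mul_dvd_mul_left q hpE
  have hstep : ∀ c : Fin n → ℕ, ∏ i, ((m i + q * c i : ℕ) : ZMod P)⁻¹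
      = ∏ i, a i + ∑ i, ((q * c i : ℕ) : ZMod P) * G i := by
    intro c
    have hterm : ∀ i : Fin n, ((m i + q * c i : ℕ) : ZMod P)⁻¹
        = a i + (-(((q * c i : ℕ) : ZMod P)) * (a i)^2) := by
      intro i
      have ht : (((q * c i : ℕ) : ZMod P))^2 = 0 := by
        have : (((q * c i : ℕ) : ZMod P))^2 = ((q : ZMod P))^2 * ((c i : ℕ) : ZMod P)^2 := by
          push_cast; ring
        rw [this, hq2, zero_mul]
      rw [aux6_inv_add_nil (m i) (q * c i) (hunit i) ht, ha, sub_eq_add_neg, neg_mul]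
    rw [Finset.prod_congr rfl (fun i _ => hterm i)]
    rw [aux6_prod_add_nil Finset.univ a (fun i => -(((q * c i : ℕ) : ZMod P)) * (a i)^2)
      (fun i j => by
        have : -(((q * c i : ℕ) : ZMod P)) * (a i)^2 * (-(((q * c j : ℕ) : ZMod P)) * (a j)^2)
            = ((q : ZMod P))^2 * (((c i : ℕ) : ZMod P) * ((c j : ℕ) : ZMod P) * (a i)^2 * (a j)^2) := by
          push_cast; ring
        rw [this, hq2, zero_mul])]
    congr 1
    refine Finset.sum_congr rfl fun i _ => ?_
    rw [hG]; ring
  calc ∑ c ∈ C, ∏ i, ((m i + q * c i : ℕ) : ZMod P)⁻¹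
      = ∑ c ∈ C, (∏ i, a i + ∑ i, ((q * c i : ℕ) : ZMod P) * G i) :=
        Finset.sum_congr rfl fun c _ => hstep c
    _ = C.card • ∏ i, a i + ∑ i : Fin n, (∑ c ∈ C, ((q * c i : ℕ) : ZMod P)) * G i := by
        rw [Finset.sum_add_distrib, Finset.sum_const, Finset.sum_comm]
        congr 1
        exact Finset.sum_congr rfl fun i _ => (Finset.sum_mul _ _ _).symm
    _ = (C.card : ZMod P) * ∏ i, a i := by
        rw [Finset.sum_congr rfl (fun i _ => by rw [hzero i, zero_mul]),
          Finset.sum_const_zero, add_zero, nsmul_eq_mul]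
    _ = (Nat.choose (p - k + n - 1) (n - 1) : ZMod P) * ∏ i, a i := by rw [hcard]

theorem stmt6 (p n r : ℕ) (hp : p.Prime) (hn : 2 ≤ n) (hpn : n < p) (hr : 1 ≤ r) :
    (∑ l ∈ (Fintype.piFinset fun _ : Fin n => Finset.Ioo 0 (p ^ (r + 1))).filter
        (fun l => (∀ i, Nat.Coprime (l i) p) ∧ ∑ i, l i = 1 * p ^ (r + 1)),
      ∏ i, ((l i : ZMod (p ^ (r + 1))))⁻¹) =
    ∑ k ∈ Finset.Icc 1 (n - 1), (Nat.choose (p - k + n - 1) (n - 1) : ZMod (p ^ (r + 1))) *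
      ∑ l ∈ (Fintype.piFinset fun _ : Fin n => Finset.Ioo 0 (p ^ r)).filter
        (fun l => (∀ i, Nat.Coprime (l i) p) ∧ ∑ i, l i = k * p ^ r),
      ∏ i, ((l i : ZMod (p ^ (r + 1))))⁻¹ := by
  classical
  have hq0 : 0 < p ^ r := Nat.pow_pos hp.pos
  -- Step A: split the LHS into fibers according to κ l = p - ∑ i, l i / p^r
  have hmaps : ∀ l ∈ (Fintype.piFinset fun _ : Fin n => Finset.Ioo 0 (p ^ (r + 1))).filter
      (fun l => (∀ i, Nat.Coprime (l i) p) ∧ ∑ i, l i = 1 * p ^ (r + 1)),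
      (p - ∑ i, l i / p ^ r) ∈ Finset.Icc 1 (n - 1) := by
    intro l hl
    rw [Finset.mem_filter] at hl
    obtain ⟨hpi, hcop, hsum⟩ := hl
    rw [one_mul] at hsum
    have hio : ∀ i, 0 < l i ∧ l i < p ^ (r + 1) := fun i =>
      Finset.mem_Ioo.mp (Fintype.mem_piFinset.mp hpi i)
    obtain ⟨-, -, h1, h2, -⟩ := aux6_decomp_mem p n r hp hn hpn hr l
      (fun i => (hio i).1) (fun i => (hio i).2) hcop hsum
    exact Finset.mem_Icc.mpr ⟨h1, h2⟩
  rw [← Finset.sum_fiberwise_of_maps_to hmaps]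
  refine Finset.sum_congr rfl fun k hk => ?_
  rw [Finset.mem_Icc] at hk
  obtain ⟨hk1, hk2⟩ := hk
  -- per-k computation
  calc ∑ l ∈ ((Fintype.piFinset fun _ : Fin n => Finset.Ioo 0 (p ^ (r + 1))).filter
          (fun l => (∀ i, Nat.Coprime (l i) p) ∧ ∑ i, l i = 1 * p ^ (r + 1))).filter
          (fun l => p - ∑ i, l i / p ^ r = k),
        ∏ i, ((l i : ZMod (p ^ (r + 1))))⁻¹
      = ∑ mc ∈ ((Fintype.piFinset fun _ : Fin n => Finset.Ioo 0 (p ^ r)).filter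
            (fun l => (∀ i, Nat.Coprime (l i) p) ∧ ∑ i, l i = k * p ^ r)) ×ˢ
            Finset.Nat.antidiagonalTuple n (p - k),
          ∏ i, ((mc.1 i + p ^ r * mc.2 i : ℕ) : ZMod (p ^ (r + 1)))⁻¹ := by
        refine (Finset.sum_nbij'
          (i := fun (mc : (Fin n → ℕ) × (Fin n → ℕ)) => fun t => mc.1 t + p ^ r * mc.2 t)
          (j := fun (l : Fin n → ℕ) =>
            ((fun t => l t % p ^ r, fun t => l t / p ^ r) : (Fin n → ℕ) × (Fin n → ℕ)))
          ?_ ?_ ?_ ?_ ?_).symm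
        · -- hi : image of composition lies in the fiber
          rintro ⟨m, c⟩ hmc
          rw [Finset.mem_product] at hmc
          obtain ⟨hmM, hcC⟩ := hmc
          rw [Finset.mem_filter] at hmM
          obtain ⟨hpi, hcop, hms⟩ := hmM
          have hio : ∀ i, 0 < m i ∧ m i < p ^ r := fun i =>
            Finset.mem_Ioo.mp (Fintype.mem_piFinset.mp hpi i)
          have hcs : ∑ i, c i = p - k := Finset.Nat.mem_antidiagonalTuple.mp hcC
          obtain ⟨hlt, hcop', hsum', -, -, hκ⟩ :=
            aux6_comp_mem p n r k hp hn hpn hr hk1 hk2 m c hio hcop hms hcs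
          refine Finset.mem_filter.mpr ⟨Finset.mem_filter.mpr
            ⟨Fintype.mem_piFinset.mpr (fun i => Finset.mem_Ioo.mpr (hlt i)),
             hcop', by rw [one_mul]; exact hsum'⟩, hκ⟩
        · -- hj : decomposition lies in the product
          intro l hl
          rw [Finset.mem_filter] at hl
          obtain ⟨hl, hκ⟩ := hl
          rw [Finset.mem_filter] at hl
          obtain ⟨hpi, hcop, hsum⟩ := hl
          rw [one_mul] at hsum
          have hio : ∀ i, 0 < l i ∧ l i < p ^ (r + 1) := fun i =>
            Finset.mem_Ioo.mp (Fintype.mem_piFinset.mp hpi i)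
          obtain ⟨hmc, hBlt, -, -, hmsum⟩ := aux6_decomp_mem p n r hp hn hpn hr l
            (fun i => (hio i).1) (fun i => (hio i).2) hcop hsum
          rw [Finset.mem_product]
          constructor
          · refine Finset.mem_filter.mpr ⟨Fintype.mem_piFinset.mpr (fun i =>
              Finset.mem_Ioo.mpr ⟨(hmc i).1, Nat.mod_lt _ hq0⟩),
              fun i => (hmc i).2, ?_⟩
            rw [hmsum, hκ]
          · refine Finset.Nat.mem_antidiagonalTuple.mpr ?_
            show (∑ i, l i / p ^ r) = p - k
            omega
        · -- left inverse
          rintro ⟨m, c⟩ hmc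
          rw [Finset.mem_product] at hmc
          obtain ⟨hmM, -⟩ := hmc
          rw [Finset.mem_filter] at hmM
          have hio : ∀ i, 0 < m i ∧ m i < p ^ r := fun i =>
            Finset.mem_Ioo.mp (Fintype.mem_piFinset.mp hmM.1 i)
          refine Prod.ext (funext fun t => ?_) (funext fun t => ?_)
          · show (m t + p ^ r * c t) % p ^ r = m t
            rw [Nat.add_mul_mod_self_left, Nat.mod_eq_of_lt (hio t).2]
          · show (m t + p ^ r * c t) / p ^ r = c t
            rw [Nat.add_mul_div_left _ _ hq0, Nat.div_eq_of_lt (hio t).2, Nat.zero_add]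
        · -- right inverse
          intro l _
          funext t
          exact Nat.mod_add_div (l t) (p ^ r)
        · intro mc _
          rfl
    _ = ∑ m ∈ (Fintype.piFinset fun _ : Fin n => Finset.Ioo 0 (p ^ r)).filter
            (fun l => (∀ i, Nat.Coprime (l i) p) ∧ ∑ i, l i = k * p ^ r),
          ∑ c ∈ Finset.Nat.antidiagonalTuple n (p - k),
            ∏ i, ((m i + p ^ r * c i : ℕ) : ZMod (p ^ (r + 1)))⁻¹ := by rw [Finset.sum_product]
    _ = ∑ m ∈ (Fintype.piFinset fun _ : Fin n => Finset.Ioo 0 (p ^ r)).filter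
            (fun l => (∀ i, Nat.Coprime (l i) p) ∧ ∑ i, l i = k * p ^ r),
          (Nat.choose (p - k + n - 1) (n - 1) : ZMod (p ^ (r + 1)))
            * ∏ i, ((m i : ℕ) : ZMod (p ^ (r + 1)))⁻¹ := by
        refine Finset.sum_congr rfl fun m hm => ?_
        rw [Finset.mem_filter] at hm
        exact aux6_inner_sum p n r k hp hn hpn hr hk1 hk2 m hm.2.1
    _ = (Nat.choose (p - k + n - 1) (n - 1) : ZMod (p ^ (r + 1))) *
          ∑ l ∈ (Fintype.piFinset fun _ : Fin n => Finset.Ioo 0 (p ^ r)).filter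
            (fun l => (∀ i, Nat.Coprime (l i) p) ∧ ∑ i, l i = k * p ^ r),
          ∏ i, ((l i : ZMod (p ^ (r + 1))))⁻¹ := by
        rw [Finset.mul_sum]
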